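/- Let K be a field, n a natural number, and i < j two indices. For a vector w ∈ K^n with w_k = 0 for all k ≤ i and a vector u ∈ K^n with u_k = 0 for all k ≤ j, define the eliminants L_i(w) = I_n + Σ_k w_k · E_{k,i} and L_j(u) = I_n + Σ_k u_k · E_{k,j}, where E_{k,i} is the matrix unit with a single entry 1 in row k and column i. Then L_j(u) · L_i(w) = L_i(w') · L_j(u), where w' ∈ K^n is the vector with w'_k = w_k + u_k · w_j for k > j and w'_k = w_k otherwise. -/

import Mathlib

def eliminant {K : Type*} [Field K] {n : ℕ} (i : Fin n) (w : Fin n → K) :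
    Matrix (Fin n) (Fin n) K :=
  1 + ∑ k : Fin n, Matrix.single k i (w k)

lemma eliminant_apply {K : Type*} [Field K] {n : ℕ} (i : Fin n) (w : Fin n → K)
    (a b : Fin n) :
    eliminant i w a b = (if a = b then 1 else 0) + if b = i then w a else 0 := by
  simp only [eliminant, Matrix.add_apply, Matrix.one_apply, Matrix.single,
    Matrix.sum_apply, Matrix.of_apply, ite_and]
  rw [Finset.sum_ite_eq' Finset.univ a fun x => if i = b then w x else 0]
  simp [eq_comm]

lemma eliminant_mul_apply {K : Type*} [Field K] {n : ℕ} (i j : Fin n)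
    (w u : Fin n → K) (a b : Fin n) :
    (eliminant j u * eliminant i w) a b =
      (if a = b then 1 else 0) + (if b = i then w a else 0) +
        ((if b = j then u a else 0) + (if b = i then u a * w j else 0)) := by
  simp only [Matrix.mul_apply, eliminant_apply, add_mul, mul_add,
    Finset.sum_add_distrib]
  have h1 : (∑ x : Fin n, (if a = x then (1:K) else 0) * if x = b then 1 else 0)
      = if a = b then 1 else 0 := by
    simp [ite_mul, Finset.sum_ite_eq Finset.univ a]
  have h2 : (∑ x : Fin n, (if x = j then u a else 0) * if x = b then (1:K) else 0)
      = if b = j then u a else 0 := by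
    simp only [ite_mul, zero_mul, Finset.sum_ite_eq' Finset.univ j, Finset.mem_univ,
      if_true, mul_ite, mul_one, mul_zero]
    simp [eq_comm]
  have h3 : (∑ x : Fin n, (if a = x then (1:K) else 0) * if b = i then w x else 0)
      = if b = i then w a else 0 := by
    simp [ite_mul, Finset.sum_ite_eq Finset.univ a]
  have h4 : (∑ x : Fin n, (if x = j then u a else 0) * if b = i then w x else 0)
      = if b = i then u a * w j else 0 := by
    simp only [ite_mul, zero_mul, Finset.sum_ite_eq' Finset.univ j, Finset.mem_univ, if_true]
    split <;> simp
  rw [h1, h2, h3, h4]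
  split_ifs <;> ring

theorem eliminant_mul_eliminant_descending
    (K : Type*) [Field K] (n : ℕ) (i j : Fin n) (hij : i < j)
    (w u : Fin n → K)
    (hw : ∀ k : Fin n, k ≤ i → w k = 0)
    (hu : ∀ k : Fin n, k ≤ j → u k = 0) :
    eliminant j u * eliminant i w =
      eliminant i (fun k => if j < k then w k + u k * w j else w k) * eliminant j u := by
  ext a b
  rw [eliminant_mul_apply, eliminant_mul_apply]
  have hui : u i = 0 := hu i hij.le
  have hwa : (if j < a then w a + u a * w j else w a) = w a + u a * w j := by
    split
    · rfl
    · rw [hu a (not_lt.mp (by assumption)), zero_mul, add_zero]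
  simp only [hui, hwa, mul_zero]
  split_ifs <;> ring
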